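/- Let (∧,∨) be the reference pair of a Morse sequence W on K, let κ be a critical face of W and let ν be any face of K. Then (1) κ ∈ ∧(ν) if and only if the number of gradient paths in W from ν to κ is odd, and (2) κ ∈ ∨(ν) if and only if the number of cogradient paths in W from κ to ν is odd. -/

import Mathlib

/-! ## Basic notions: simplicial complexes, collapses, expansions, fillings -/

variable {V : Type*} [DecidableEq V]

/-- A (finite) simplicial complex: a finite collection of nonempty finite sets that is
closed under taking nonempty subsets. -/
def IsComplex (K : Finset (Finset V)) : Prop :=
  ∀ τ ∈ K, τ.Nonempty ∧ ∀ σ, σ ⊆ τ → σ.Nonempty → σ ∈ K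

/-- `ν` is a facet (inclusion-maximal face) of `K`. -/
def IsFacet (K : Finset (Finset V)) (ν : Finset V) : Prop :=
  ν ∈ K ∧ ∀ ρ ∈ K, ν ⊆ ρ → ρ = ν

/-- `(σ, τ)` is a free pair for `K`: `σ ⊊ τ` and `τ` is the only face of `K`
strictly containing `σ`. -/
def IsFreePair (K : Finset (Finset V)) (σ τ : Finset V) : Prop :=
  σ ∈ K ∧ τ ∈ K ∧ σ ⊂ τ ∧ ∀ ρ ∈ K, σ ⊂ ρ → ρ = τ

/-- `K` is an elementary expansion of `L` (equivalently, `L` is an elementary collapse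
of `K`): `L = K \ {σ, τ}` for some free pair `(σ, τ)` of `K`. -/
def ElemExpansion (L K : Finset (Finset V)) : Prop :=
  ∃ σ τ, IsFreePair K σ τ ∧ L = K \ {σ, τ}

/-- `K` is an elementary filling of `L` (equivalently, `L` is an elementary perforation
of `K`): `L = K \ {ν}` for some facet `ν` of `K`. -/
def ElemFilling (L K : Finset (Finset V)) : Prop :=
  ∃ ν, IsFacet K ν ∧ L = K \ {ν}

/-- `L` is an elementary collapse of `K`. -/
def ElemCollapse (K L : Finset (Finset V)) : Prop :=
  ∃ σ τ, IsFreePair K σ τ ∧ L = K \ {σ, τ}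

/-- `K` collapses onto `L`: there is a sequence of elementary collapses from `K` to `L`. -/
def CollapsesOnto (K L : Finset (Finset V)) : Prop :=
  Relation.ReflTransGen ElemCollapse K L

/-! ## Morse sequences -/

/-- A Morse sequence `⟨∅ = K₀, …, K_k = K⟩`: each `K_i` is a simplicial complex that is
an elementary expansion or an elementary filling of `K_{i-1}`. -/
structure MorseSeq (V : Type*) [DecidableEq V] where
  k : ℕ
  seq : ℕ → Finset (Finset V)
  cpx : ∀ i ≤ k, IsComplex (seq i)
  init : seq 0 = ∅
  step : ∀ i, 1 ≤ i → i ≤ k → ElemExpansion (seq (i - 1)) (seq i) ∨ ElemFilling (seq (i - 1)) (seq i)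

/-- The simplicial complex `K = K_k` on which the Morse sequence lives. -/
def MorseSeq.cplx (W : MorseSeq V) : Finset (Finset V) := W.seq W.k

/-- A face added by a filling step: a critical face of `W`. -/
def MorseSeq.Critical (W : MorseSeq V) (ν : Finset V) : Prop :=
  ∃ i, 1 ≤ i ∧ i ≤ W.k ∧ W.seq i \ W.seq (i - 1) = {ν}

/-- `(σ, τ)` is a regular pair for `W`: the two faces are added together by an
elementary expansion step. -/
def MorseSeq.Regular (W : MorseSeq V) (σ τ : Finset V) : Prop :=
  ∃ i, 1 ≤ i ∧ i ≤ W.k ∧ σ ⊂ τ ∧ W.seq i \ W.seq (i - 1) = {σ, τ}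

/-- `σ` is lower regular for `W`. -/
def MorseSeq.LowerRegular (W : MorseSeq V) (σ : Finset V) : Prop := ∃ τ, W.Regular σ τ

/-- `τ` is upper regular for `W`. -/
def MorseSeq.UpperRegular (W : MorseSeq V) (τ : Finset V) : Prop := ∃ σ, W.Regular σ τ

/-! ## Chains modulo 2 -/

/-- The boundary `∂(σ)` of a simplex: the chain of its (nonempty) codimension-one faces. -/
def bd (σ : Finset V) : Finset (Finset V) :=
  σ.powerset.filter fun ρ => ρ.Nonempty ∧ ρ.card + 1 = σ.card

/-- The coboundary `δ(σ)` of a simplex in `K`: the chain of faces of `K` of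
codimension one over `σ` containing `σ`. -/
def cobd (K : Finset (Finset V)) (σ : Finset V) : Finset (Finset V) :=
  K.filter fun τ => σ ⊆ τ ∧ σ.card + 1 = τ.card

/-- Mod-2 linear extension: `chainSum c f` is the sum (symmetric difference) of
the chains `f σ` over `σ ∈ c`; an element belongs to it iff it belongs to an odd
number of the `f σ`. -/
def chainSum (c : Finset (Finset V)) (f : Finset V → Finset (Finset V)) : Finset (Finset V) :=
  (c.biUnion f).filter fun ν => (c.filter fun σ => ν ∈ f σ).card % 2 = 1

/-- `c` is a `p`-chain of `K`: a set of `p`-simplices of `K`. -/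
def IsChainOf (K : Finset (Finset V)) (p : ℕ) (c : Finset (Finset V)) : Prop :=
  ∀ ν ∈ c, ν ∈ K ∧ ν.card = p + 1

/-- `c` is a chain of critical `p`-simplices of `W` (an element of `Ŵ[p]`). -/
def IsCritChain (W : MorseSeq V) (p : ℕ) (c : Finset (Finset V)) : Prop :=
  ∀ ν ∈ c, W.Critical ν ∧ ν.card = p + 1

/-! ## Frames, reference and coreference maps -/

/-- A frame on `W`: it assigns to each `p`-simplex of `K` a chain of critical
`p`-simplices of `W`. -/
def IsFrame (W : MorseSeq V) (Υ : Finset V → Finset (Finset V)) : Prop :=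
  ∀ ν ∈ W.cplx, ∀ μ ∈ Υ ν, W.Critical μ ∧ μ.card = ν.card

/-- `Λ` is the reference map of `W`: a frame with `Λ(ν) = ν` for critical `ν`, and
`Λ(τ) = 0`, `Λ(∂τ) = 0` for upper regular `τ`. -/
def IsRefMap (W : MorseSeq V) (Λ : Finset V → Finset (Finset V)) : Prop :=
  IsFrame W Λ ∧ (∀ ν, W.Critical ν → Λ ν = {ν}) ∧
    ∀ τ, W.UpperRegular τ → Λ τ = ∅ ∧ chainSum (bd τ) Λ = ∅

/-- `Λ` is the coreference map of `W`: a frame with `Λ(ν) = ν` for critical `ν`, and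
`Λ(σ) = 0`, `Λ(δσ) = 0` for lower regular `σ`. -/
def IsCorefMap (W : MorseSeq V) (Λ : Finset V → Finset (Finset V)) : Prop :=
  IsFrame W Λ ∧ (∀ ν, W.Critical ν → Λ ν = {ν}) ∧
    ∀ σ, W.LowerRegular σ → Λ σ = ∅ ∧ chainSum (cobd W.cplx σ) Λ = ∅

/-- The extension map `∧̃` of `W` (defined from the coreference map `Vee`):
`∧̃(κ) = {ν ∈ K | κ ∈ ∨(ν)}`. -/
def extMap (W : MorseSeq V) (Vee : Finset V → Finset (Finset V)) (κ : Finset V) :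
    Finset (Finset V) :=
  W.cplx.filter fun ν => κ ∈ Vee ν

/-- The coextension map `∨̃` of `W` (defined from the reference map `Λ`):
`∨̃(κ) = {ν ∈ K | κ ∈ ∧(ν)}`. -/
def coextMap (W : MorseSeq V) (Λ : Finset V → Finset (Finset V)) (κ : Finset V) :
    Finset (Finset V) :=
  W.cplx.filter fun ν => κ ∈ Λ ν

/-! ## Gradient and cogradient paths -/

/-- `IsGradPathList W l` : the list `l = [σ₀, τ₀, σ₁, τ₁, …, σ_k]` is a gradient path
in `W`. -/
inductive IsGradPathList (W : MorseSeq V) : List (Finset V) → Prop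
  | single (σ : Finset V) : σ ∈ W.cplx → IsGradPathList W [σ]
  | cons (σ τ σ' : Finset V) (rest : List (Finset V)) :
      W.Regular σ τ → σ' ∈ bd τ → σ' ≠ σ → IsGradPathList W (σ' :: rest) →
      IsGradPathList W (σ :: τ :: σ' :: rest)

/-- `IsCogradPathList W l` : the list `l = [τ₀, σ₁, τ₁, …, σ_k, τ_k]` is a cogradient path
in `W`. -/
inductive IsCogradPathList (W : MorseSeq V) : List (Finset V) → Prop
  | single (τ : Finset V) : τ ∈ W.cplx → IsCogradPathList W [τ]
  | cons (τ σ' τ' : Finset V) (rest : List (Finset V)) :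
      W.Regular σ' τ' → τ ∈ cobd W.cplx σ' → τ' ≠ τ → IsCogradPathList W (τ' :: rest) →
      IsCogradPathList W (τ :: σ' :: τ' :: rest)

/-- The set of gradient paths in `W` from `ν` to `κ`. -/
def GradPaths (W : MorseSeq V) (ν κ : Finset V) : Set (List (Finset V)) :=
  {l | IsGradPathList W l ∧ l.head? = some ν ∧ l.getLast? = some κ}

/-- The set of cogradient paths in `W` from `κ` to `ν`. -/
def CogradPaths (W : MorseSeq V) (κ ν : Finset V) : Set (List (Finset V)) :=
  {l | IsCogradPathList W l ∧ l.head? = some κ ∧ l.getLast? = some ν}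

/-- A `∧`-path: a gradient path `⟨σ₀, τ₀, …, σ_k⟩` such that `σ_k ∈ Λ(σ_i)` for every
`i ∈ [0,k]` (the `σ_i` sit at the even positions of the list). -/
def IsRefPath (W : MorseSeq V) (Λ : Finset V → Finset (Finset V))
    (l : List (Finset V)) : Prop :=
  IsGradPathList W l ∧ ∀ κ ∈ l.getLast?, ∀ i, i % 2 = 0 → ∀ σ ∈ l[i]?, κ ∈ Λ σ

/-- A `∨`-path: a cogradient path `⟨τ₀, σ₁, τ₁, …, τ_k⟩` such that `τ₀ ∈ Vee(τ_i)` for every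
`i ∈ [0,k]` (the `τ_i` sit at the even positions of the list). -/
def IsCorefPath (W : MorseSeq V) (Vee : Finset V → Finset (Finset V))
    (l : List (Finset V)) : Prop :=
  IsCogradPathList W l ∧ ∀ κ ∈ l.head?, ∀ i, i % 2 = 0 → ∀ τ ∈ l[i]?, κ ∈ Vee τ

section Aux

open Finset

variable (W : MorseSeq V)

lemma seq_subset_step {i : ℕ} (h1 : 1 ≤ i) (h2 : i ≤ W.k) : W.seq (i-1) ⊆ W.seq i := by
  rcases W.step i h1 h2 with ⟨σ, τ, _, h⟩ | ⟨ν, _, h⟩ <;> rw [h] <;> exact Finset.sdiff_subset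

lemma seq_mono : ∀ {i j : ℕ}, i ≤ j → j ≤ W.k → W.seq i ⊆ W.seq j := by
  intro i j hij hj
  induction j with
  | zero => simpa [Nat.le_zero.mp hij] using subset_rfl
  | succ n ih =>
    rcases Nat.lt_or_ge i (n+1) with h | h
    · have : W.seq n ⊆ W.seq (n+1) := by
        have := seq_subset_step W (i := n+1) (by omega) hj
        simpa using this
      exact (ih (by omega) (by omega)).trans this
    · have : i = n + 1 := by omega
      simp [this]

lemma mem_cplx_of_mem_seq {i : ℕ} (hi : i ≤ W.k) {ν : Finset V} (h : ν ∈ W.seq i) :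
    ν ∈ W.cplx := seq_mono W hi le_rfl h

/-- a face is added at a unique step -/
lemma added_unique {i j : ℕ} (hi1 : 1 ≤ i) (hi2 : i ≤ W.k) (hj1 : 1 ≤ j) (hj2 : j ≤ W.k)
    {ν : Finset V} (h1 : ν ∈ W.seq i) (h2 : ν ∉ W.seq (i-1))
    (h3 : ν ∈ W.seq j) (h4 : ν ∉ W.seq (j-1)) : i = j := by
  by_contra hne
  rcases Nat.lt_or_ge i j with h | h
  · exact h4 (seq_mono W (by omega) (by omega) h1)
  · have : j < i := by omega
    exact h2 (seq_mono W (by omega) (by omega) h3)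

lemma regular_mem_diff {σ τ : Finset V} (h : W.Regular σ τ) :
    ∃ i, 1 ≤ i ∧ i ≤ W.k ∧ σ ⊂ τ ∧ W.seq i \ W.seq (i-1) = {σ, τ} ∧
      σ ∈ W.seq i ∧ σ ∉ W.seq (i-1) ∧ τ ∈ W.seq i ∧ τ ∉ W.seq (i-1) := by
  obtain ⟨i, h1, h2, hst, hd⟩ := h
  refine ⟨i, h1, h2, hst, hd, ?_, ?_, ?_, ?_⟩
  · have : σ ∈ W.seq i \ W.seq (i-1) := by rw [hd]; simp
    exact (Finset.mem_sdiff.mp this).1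
  · have : σ ∈ W.seq i \ W.seq (i-1) := by rw [hd]; simp
    exact (Finset.mem_sdiff.mp this).2
  · have : τ ∈ W.seq i \ W.seq (i-1) := by rw [hd]; simp
    exact (Finset.mem_sdiff.mp this).1
  · have : τ ∈ W.seq i \ W.seq (i-1) := by rw [hd]; simp
    exact (Finset.mem_sdiff.mp this).2

lemma critical_mem_diff {ν : Finset V} (h : W.Critical ν) :
    ∃ i, 1 ≤ i ∧ i ≤ W.k ∧ W.seq i \ W.seq (i-1) = {ν} ∧ ν ∈ W.seq i ∧ ν ∉ W.seq (i-1) := by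
  obtain ⟨i, h1, h2, hd⟩ := h
  have : ν ∈ W.seq i \ W.seq (i-1) := by rw [hd]; simp
  exact ⟨i, h1, h2, hd, (Finset.mem_sdiff.mp this).1, (Finset.mem_sdiff.mp this).2⟩

lemma critical_mem_cplx {ν : Finset V} (h : W.Critical ν) : ν ∈ W.cplx := by
  obtain ⟨i, _, h2, _, h4, _⟩ := critical_mem_diff W h
  exact mem_cplx_of_mem_seq W h2 h4

/-- a critical face is not part of a regular pair -/
lemma critical_not_regular {ν σ τ : Finset V} (hc : W.Critical ν) (hr : W.Regular σ τ)
    (hmem : ν = σ ∨ ν = τ) : False := by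
  obtain ⟨i, hi1, hi2, hdi, hνi, hνi'⟩ := critical_mem_diff W hc
  obtain ⟨j, hj1, hj2, hst, hdj, hσ1, hσ2, hτ1, hτ2⟩ := regular_mem_diff W hr
  have hij : i = j := by
    rcases hmem with rfl | rfl
    · exact added_unique W hi1 hi2 hj1 hj2 hνi hνi' hσ1 hσ2
    · exact added_unique W hi1 hi2 hj1 hj2 hνi hνi' hτ1 hτ2
  rw [hij, hdj] at hdi
  have hστ : σ ≠ τ := hst.ne
  have : σ ∈ ({ν} : Finset (Finset V)) := by rw [← hdi]; simp
  have hσν : σ = ν := by simpa using this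
  have : τ ∈ ({ν} : Finset (Finset V)) := by rw [← hdi]; simp
  have hτν : τ = ν := by simpa using this
  exact hστ (hσν.trans hτν.symm)

/-- uniqueness of the upper partner -/
lemma regular_unique_upper {σ τ τ' : Finset V} (h : W.Regular σ τ) (h' : W.Regular σ τ') :
    τ = τ' := by
  obtain ⟨i, hi1, hi2, hst, hdi, hσ1, hσ2, hτ1, hτ2⟩ := regular_mem_diff W h
  obtain ⟨j, hj1, hj2, hst', hdj, hσ1', hσ2', hτ1', hτ2'⟩ := regular_mem_diff W h'
  have hij : i = j := added_unique W hi1 hi2 hj1 hj2 hσ1 hσ2 hσ1' hσ2'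
  rw [hij, hdj] at hdi
  have : τ ∈ ({σ, τ'} : Finset (Finset V)) := by rw [hdi]; simp
  rcases Finset.mem_insert.mp this with h1 | h1
  · exact absurd h1 hst.ne.symm
  · simpa using h1

/-- uniqueness of the lower partner -/
lemma regular_unique_lower {σ σ' τ : Finset V} (h : W.Regular σ τ) (h' : W.Regular σ' τ) :
    σ = σ' := by
  obtain ⟨i, hi1, hi2, hst, hdi, hσ1, hσ2, hτ1, hτ2⟩ := regular_mem_diff W h
  obtain ⟨j, hj1, hj2, hst', hdj, hσ1', hσ2', hτ1', hτ2'⟩ := regular_mem_diff W h'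
  have hij : i = j := added_unique W hi1 hi2 hj1 hj2 hτ1 hτ2 hτ1' hτ2'
  rw [hij, hdj] at hdi
  have : σ ∈ ({σ', τ} : Finset (Finset V)) := by rw [hdi]; simp
  rcases Finset.mem_insert.mp this with h1 | h1
  · exact h1
  · simp at h1; exact absurd h1 hst.ne

/-- a face cannot be both lower and upper regular -/
lemma not_lower_and_upper {ν : Finset V} (hl : W.LowerRegular ν) (hu : W.UpperRegular ν) :
    False := by
  obtain ⟨τ, hτ⟩ := hl
  obtain ⟨σ, hσ⟩ := hu
  obtain ⟨i, hi1, hi2, hst, hdi, ha1, ha2, ha3, ha4⟩ := regular_mem_diff W hτ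
  obtain ⟨j, hj1, hj2, hst', hdj, hb1, hb2, hb3, hb4⟩ := regular_mem_diff W hσ
  have hij : i = j := added_unique W hi1 hi2 hj1 hj2 ha1 ha2 hb3 hb4
  rw [hij, hdj] at hdi
  have : τ ∈ ({σ, ν} : Finset (Finset V)) := by rw [hdi]; simp
  rcases Finset.mem_insert.mp this with h1 | h1
  · subst h1; exact (hst.trans hst').ne rfl
  · simp at h1; subst h1; exact hst.ne rfl

end Aux

section Aux2

variable (W : MorseSeq V)

lemma freePair_card {K : Finset (Finset V)} (hK : IsComplex K) {σ τ : Finset V}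
    (h : IsFreePair K σ τ) : τ.card = σ.card + 1 := by
  obtain ⟨hσ, hτ, hst, huniq⟩ := h
  have hσne : σ.Nonempty := (hK σ hσ).1
  have hcard : σ.card < τ.card := Finset.card_lt_card hst
  by_contra hne
  have h2 : σ.card + 2 ≤ τ.card := by omega
  obtain ⟨x, hxτ, hxσ⟩ := Finset.exists_of_ssubset hst
  set ρ := τ.erase x with hρ
  have hρτ : ρ ⊆ τ := Finset.erase_subset _ _
  have hρcard : ρ.card = τ.card - 1 := Finset.card_erase_of_mem hxτ
  have hσρ : σ ⊆ ρ := fun y hy => Finset.mem_erase.mpr ⟨fun h => hxσ (h ▸ hy), hst.1 hy⟩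
  have hρne : ρ.Nonempty := hσne.mono hσρ
  have hρK : ρ ∈ K := (hK τ hτ).2 ρ hρτ hρne
  have hσρ' : σ ⊂ ρ := Finset.ssubset_iff_subset_ne.mpr ⟨hσρ, by
    intro h; rw [← h] at hρcard; omega⟩
  have := huniq ρ hρK hσρ'
  rw [this] at hρcard; omega

lemma regular_freePair {σ τ : Finset V} (h : W.Regular σ τ) :
    ∃ i, 1 ≤ i ∧ i ≤ W.k ∧ IsFreePair (W.seq i) σ τ ∧
      W.seq (i-1) = W.seq i \ {σ, τ} ∧ W.seq i \ W.seq (i-1) = {σ, τ} := by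
  obtain ⟨i, h1, h2, hst, hd⟩ := h
  refine ⟨i, h1, h2, ?_, ?_, hd⟩ <;>
  · rcases W.step i h1 h2 with ⟨σ', τ', hfp, heq⟩ | ⟨ν', hfc, heq⟩
    · have hd' : W.seq i \ W.seq (i-1) = {σ', τ'} := by
        rw [heq]
        exact Finset.sdiff_sdiff_eq_self (by
          intro x hx
          rcases Finset.mem_insert.mp hx with rfl | hx
          · exact hfp.1
          · simp at hx; subst hx; exact hfp.2.1)
      rw [hd'] at hd
      have hσ : σ ∈ ({σ', τ'} : Finset (Finset V)) := by rw [hd]; simp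
      have hτ : τ ∈ ({σ', τ'} : Finset (Finset V)) := by rw [hd]; simp
      have hmatch : σ = σ' ∧ τ = τ' := by
        have hσ2 := Finset.mem_insert.mp hσ
        have hτ2 := Finset.mem_insert.mp hτ
        simp only [Finset.mem_singleton] at hσ2 hτ2
        have hστ := hst.ne
        have hfpne := hfp.2.2.1
        rcases hσ2 with h1 | h1 <;> rcases hτ2 with h2 | h2
        · exact absurd (h1.trans h2.symm) hστ
        · exact ⟨h1, h2⟩
        · exfalso
          rw [← h2, ← h1] at hfpne
          exact (hst.trans hfpne).ne rfl
        · exact absurd (h1.trans h2.symm) hστ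
      obtain ⟨rfl, rfl⟩ := hmatch
      first
        | exact hfp
        | rw [heq]
    · exfalso
      have hd' : W.seq i \ W.seq (i-1) = {ν'} := by
        rw [heq]
        exact Finset.sdiff_sdiff_eq_self (by simpa using hfc.1)
      rw [hd'] at hd
      have hσ : σ ∈ ({ν'} : Finset (Finset V)) := by rw [hd]; simp
      have hτ : τ ∈ ({ν'} : Finset (Finset V)) := by rw [hd]; simp
      simp at hσ hτ
      exact hst.ne (hσ.trans hτ.symm)

lemma regular_card {σ τ : Finset V} (h : W.Regular σ τ) : τ.card = σ.card + 1 := by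
  obtain ⟨i, h1, h2, hfp, _⟩ := regular_freePair W h
  exact freePair_card (W.cpx i h2) hfp

lemma mem_bd_iff {ρ τ : Finset V} : ρ ∈ bd τ ↔ ρ ⊆ τ ∧ ρ.Nonempty ∧ ρ.card + 1 = τ.card := by
  simp [bd, and_assoc]

lemma mem_cobd_iff {K : Finset (Finset V)} {σ τ : Finset V} :
    τ ∈ cobd K σ ↔ τ ∈ K ∧ σ ⊆ τ ∧ σ.card + 1 = τ.card := by
  simp [cobd, and_assoc]

lemma regular_mem_bd {σ τ : Finset V} (h : W.Regular σ τ) : σ ∈ bd τ := by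
  obtain ⟨i, h1, h2, hfp, _⟩ := regular_freePair W h
  exact mem_bd_iff.mpr ⟨hfp.2.2.1.1, ((W.cpx i h2) σ hfp.1).1, (regular_card W h).symm⟩

lemma regular_mem_cplx {σ τ : Finset V} (h : W.Regular σ τ) : σ ∈ W.cplx ∧ τ ∈ W.cplx := by
  obtain ⟨i, h1, h2, _, _, hσ1, _, hτ1, _⟩ := regular_mem_diff W h
  exact ⟨mem_cplx_of_mem_seq W h2 hσ1, mem_cplx_of_mem_seq W h2 hτ1⟩

/-- the other codimension-1 faces of `τ` were added strictly before the pair `(σ,τ)` -/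
lemma bd_mem_earlier {σ τ : Finset V} {i : ℕ} (h1 : 1 ≤ i) (h2 : i ≤ W.k)
    (hfp : IsFreePair (W.seq i) σ τ) (heq : W.seq (i-1) = W.seq i \ {σ, τ})
    {σ' : Finset V} (hσ' : σ' ∈ bd τ) (hne : σ' ≠ σ) : σ' ∈ W.seq (i-1) := by
  obtain ⟨hsub, hne', hcard⟩ := mem_bd_iff.mp hσ'
  have hσ'i : σ' ∈ W.seq i := ((W.cpx i h2) τ hfp.2.1).2 σ' hsub hne'
  have hστ : σ' ≠ τ := by intro h; rw [h] at hcard; omega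
  rw [heq]
  simp [hσ'i, hne, hστ]

/-- the other codimension-1 cofaces of `σ` are added strictly after the pair `(σ,ν)` -/
lemma cobd_mem_later {σ ν : Finset V} {i : ℕ} (h2 : i ≤ W.k)
    (hfp : IsFreePair (W.seq i) σ ν)
    {τ' : Finset V} (hτ' : τ' ∈ cobd W.cplx σ) (hne : τ' ≠ ν) : τ' ∉ W.seq i := by
  obtain ⟨hK, hsub, hcard⟩ := mem_cobd_iff.mp hτ'
  intro hmem
  have hσ' : σ ⊂ τ' := Finset.ssubset_iff_subset_ne.mpr ⟨hsub, by intro h; rw [← h] at hcard; omega⟩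
  exact hne (hfp.2.2.2 τ' hmem hσ')

lemma regular_mem_cobd {σ ν : Finset V} (h : W.Regular σ ν) : ν ∈ cobd W.cplx σ := by
  obtain ⟨i, _, _, hst, _⟩ := h
  exact mem_cobd_iff.mpr ⟨(regular_mem_cplx W ⟨i, ‹_›, ‹_›, hst, ‹_›⟩).2, hst.1,
    (regular_card W ⟨i, ‹_›, ‹_›, hst, ‹_›⟩).symm⟩

end Aux2

section Aux3

variable (W : MorseSeq V)

lemma mem_chainSum {c : Finset (Finset V)} {f : Finset V → Finset (Finset V)} {ν : Finset V} :
    ν ∈ chainSum c f ↔ (c.filter fun σ => ν ∈ f σ).card % 2 = 1 := by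
  unfold chainSum
  rw [Finset.mem_filter]
  constructor
  · exact And.right
  · intro h
    refine ⟨?_, h⟩
    have hne : (c.filter fun σ => ν ∈ f σ).Nonempty := by
      rw [← Finset.card_pos]; omega
    obtain ⟨σ, hσ⟩ := hne
    rw [Finset.mem_filter] at hσ
    exact Finset.mem_biUnion.mpr ⟨σ, hσ.1, hσ.2⟩

lemma chainSum_empty_even {c : Finset (Finset V)} {f : Finset V → Finset (Finset V)}
    (h : chainSum c f = ∅) (ν : Finset V) : (c.filter fun σ => ν ∈ f σ).card % 2 = 0 := by
  by_contra h'
  have hmem : ν ∈ chainSum c f := mem_chainSum.mpr (by omega)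
  rw [h] at hmem
  simp at hmem

lemma odd_sum_iff {α : Type*} (S : Finset α) (n : α → ℕ) :
    Odd (∑ a ∈ S, n a) ↔ Odd ((S.filter fun a => Odd (n a)).card) := by
  classical
  have key : (∑ a ∈ S, n a % 2) = (S.filter fun a => Odd (n a)).card := by
    rw [Finset.card_eq_sum_ones, Finset.sum_filter]
    apply Finset.sum_congr rfl
    intro a _
    by_cases h : Odd (n a)
    · simp [h, Nat.odd_iff.mp h]
    · rw [Nat.not_odd_iff_even] at h
      simp [Nat.even_iff.mp h, h, Nat.not_odd_iff_even.mpr h]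
  rw [Nat.odd_iff, Nat.odd_iff, Finset.sum_nat_mod, key]

lemma odd_card_biUnion {α β : Type*} [DecidableEq α] [DecidableEq β]
    (S : Finset α) (F : α → Finset β)
    (hdisj : ∀ a ∈ S, ∀ b ∈ S, a ≠ b → Disjoint (F a) (F b)) :
    Odd (S.biUnion F).card ↔ Odd ((S.filter fun a => Odd (F a).card).card) := by
  rw [Finset.card_biUnion hdisj]
  exact odd_sum_iff S _

/-! ### path lemmas -/

lemma gradPath_cases {ν κ : Finset V} {l : List (Finset V)} (h : l ∈ GradPaths W ν κ) :
    (l = [ν] ∧ κ = ν) ∨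
    ∃ τ σ' rest, l = ν :: τ :: σ' :: rest ∧ W.Regular ν τ ∧ σ' ∈ bd τ ∧ σ' ≠ ν ∧
      (σ' :: rest) ∈ GradPaths W σ' κ := by
  obtain ⟨hp, hh, hl⟩ := h
  cases hp with
  | single σ hσ =>
    left
    simp at hh hl
    subst hh
    exact ⟨rfl, by simpa using hl.symm⟩
  | cons σ τ σ' rest hreg hbd hne hrest =>
    right
    have hσν : σ = ν := by simpa using hh
    subst hσν
    refine ⟨τ, σ', rest, rfl, hreg, hbd, hne, hrest, rfl, ?_⟩
    rw [List.getLast?_cons_cons, List.getLast?_cons_cons] at hl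
    exact hl

lemma gradPath_build {ν τ σ' κ : Finset V} (hreg : W.Regular ν τ) (hbd : σ' ∈ bd τ)
    (hne : σ' ≠ ν) {l : List (Finset V)} (hl : l ∈ GradPaths W σ' κ) :
    ν :: τ :: l ∈ GradPaths W ν κ := by
  obtain ⟨hp, hh, hlast⟩ := hl
  obtain ⟨rest, rfl⟩ : ∃ rest, l = σ' :: rest := by
    cases l with
    | nil => simp at hh
    | cons a t =>
      simp at hh
      exact ⟨t, by rw [hh]⟩
  refine ⟨IsGradPathList.cons ν τ σ' rest hreg hbd hne hp, rfl, ?_⟩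
  rw [List.getLast?_cons_cons, List.getLast?_cons_cons]
  exact hlast

lemma cogradPath_snoc {σ ν : Finset V} (hreg : W.Regular σ ν) :
    ∀ {l : List (Finset V)}, IsCogradPathList W l → ∀ {τ'}, l.getLast? = some τ' →
    τ' ∈ cobd W.cplx σ → ν ≠ τ' → IsCogradPathList W (l ++ [σ, ν]) := by
  intro l hp
  induction hp with
  | single τ hτ =>
    intro τ' hlast hcobd hne
    have : τ = τ' := by simpa using hlast
    subst this
    have hν : ν ∈ W.cplx := (regular_mem_cplx W hreg).2
    exact IsCogradPathList.cons τ σ ν [] hreg hcobd hne (IsCogradPathList.single ν hν)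
  | cons τ σ'' τ'' rest h1 h2 h3 h4 ih =>
    intro τ' hlast hcobd hne
    rw [List.getLast?_cons_cons, List.getLast?_cons_cons] at hlast
    have hrec := ih hlast hcobd hne
    have : (τ :: σ'' :: τ'' :: rest) ++ [σ, ν] = τ :: σ'' :: τ'' :: (rest ++ [σ, ν]) := by simp
    rw [this]
    exact IsCogradPathList.cons τ σ'' τ'' (rest ++ [σ, ν]) h1 h2 h3 (by simpa using hrec)

lemma cogradPath_build {κ σ ν τ' : Finset V} (hreg : W.Regular σ ν)
    (hcobd : τ' ∈ cobd W.cplx σ) (hne : ν ≠ τ') {l : List (Finset V)}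
    (hl : l ∈ CogradPaths W κ τ') : l ++ [σ, ν] ∈ CogradPaths W κ ν := by
  obtain ⟨hp, hh, hlast⟩ := hl
  refine ⟨cogradPath_snoc W hreg hp hlast hcobd hne, ?_, ?_⟩
  · obtain ⟨a, t, rfl⟩ : ∃ a t, l = a :: t := by
      cases l with
      | nil => simp at hh
      | cons a t => exact ⟨a, t, rfl⟩
    simpa using hh
  · have : l ++ [σ, ν] = (l ++ [σ]) ++ [ν] := by simp
    rw [this, List.getLast?_concat]

lemma cogradPath_decomp {ν : Finset V} :
    ∀ {l : List (Finset V)}, IsCogradPathList W l → l.getLast? = some ν →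
    l = [ν] ∨ ∃ l' σ τ', l = l' ++ [σ, ν] ∧ IsCogradPathList W l' ∧
      l'.getLast? = some τ' ∧ l'.head? = l.head? ∧ W.Regular σ ν ∧
      τ' ∈ cobd W.cplx σ ∧ ν ≠ τ' := by
  intro l hp
  induction hp with
  | single τ hτ =>
    intro hlast
    left
    have : τ = ν := by simpa using hlast
    rw [this]
  | cons τ σ' τ'' rest h1 h2 h3 h4 ih =>
    intro hlast
    right
    rw [List.getLast?_cons_cons, List.getLast?_cons_cons] at hlast
    rcases ih hlast with heq | ⟨l', σ, τ', heq, hp', hlast', hhead', hreg, hcobd, hne⟩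
    · -- τ'' :: rest = [ν]
      have hτν : τ'' = ν := by
        have := congrArg List.head? heq
        simpa using this
      have hrest : rest = [] := by
        have := congrArg List.tail heq
        simpa using this
      subst hτν; subst hrest
      have hτK : τ ∈ W.cplx := (mem_cobd_iff.mp h2).1
      exact ⟨[τ], σ', τ, by simp, IsCogradPathList.single τ hτK, rfl, rfl, h1, h2, h3⟩
    · obtain ⟨t, rfl⟩ : ∃ t, l' = τ'' :: t := by
        cases l' with
        | nil => simp at hhead'
        | cons a t =>
          simp only [List.head?_cons, Option.some.injEq] at hhead'
          exact ⟨t, by rw [hhead']⟩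
      refine ⟨τ :: σ' :: τ'' :: t, σ, τ', by rw [heq]; simp, ?_, ?_, rfl, hreg, hcobd, hne⟩
      · exact IsCogradPathList.cons τ σ' τ'' t h1 h2 h3 hp'
      · rw [List.getLast?_cons_cons, List.getLast?_cons_cons]
        exact hlast'

end Aux3

section Aux4

variable (W : MorseSeq V)

lemma step_cases {i : ℕ} (h1 : 1 ≤ i) (h2 : i ≤ W.k) {ν : Finset V}
    (hν : ν ∈ W.seq i) (hν' : ν ∉ W.seq (i-1)) :
    W.Critical ν ∨
    (∃ τ, W.Regular ν τ ∧ IsFreePair (W.seq i) ν τ ∧ W.seq (i-1) = W.seq i \ {ν, τ}) ∨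
    (∃ σ, W.Regular σ ν ∧ IsFreePair (W.seq i) σ ν ∧ W.seq (i-1) = W.seq i \ {σ, ν}) := by
  have hνd : ν ∈ W.seq i \ W.seq (i-1) := Finset.mem_sdiff.mpr ⟨hν, hν'⟩
  rcases W.step i h1 h2 with ⟨σ', τ', hfp, heq⟩ | ⟨ν', hfc, heq⟩
  · have hd' : W.seq i \ W.seq (i-1) = {σ', τ'} := by
      rw [heq]
      exact Finset.sdiff_sdiff_eq_self (by
        intro x hx
        rcases Finset.mem_insert.mp hx with rfl | hx
        · exact hfp.1
        · simp at hx; subst hx; exact hfp.2.1)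
    have hreg : W.Regular σ' τ' := ⟨i, h1, h2, hfp.2.2.1, hd'⟩
    rw [hd'] at hνd
    rcases Finset.mem_insert.mp hνd with rfl | hνd
    · exact Or.inr (Or.inl ⟨τ', hreg, hfp, heq⟩)
    · simp only [Finset.mem_singleton] at hνd
      subst hνd
      exact Or.inr (Or.inr ⟨σ', hreg, hfp, heq⟩)
  · have hd' : W.seq i \ W.seq (i-1) = {ν'} := by
      rw [heq]
      exact Finset.sdiff_sdiff_eq_self (by simpa using hfc.1)
    rw [hd'] at hνd
    simp only [Finset.mem_singleton] at hνd
    subst hνd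
    exact Or.inl ⟨i, h1, h2, hd'⟩

lemma gradPaths_self_critical {ν : Finset V} (hc : W.Critical ν) :
    GradPaths W ν ν = {[ν]} := by
  ext l
  constructor
  · intro hl
    rcases gradPath_cases W hl with ⟨h, _⟩ | ⟨τ, σ', rest, _, hreg, _⟩
    · exact h
    · exact absurd (Or.inl rfl) (fun h => critical_not_regular W hc hreg h)
  · rintro rfl
    exact ⟨IsGradPathList.single ν (critical_mem_cplx W hc), rfl, rfl⟩

lemma gradPaths_critical_ne {ν κ : Finset V} (hc : W.Critical ν) (hκν : κ ≠ ν) :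
    GradPaths W ν κ = ∅ := by
  ext l
  simp only [Set.mem_empty_iff_false, iff_false]
  intro hl
  rcases gradPath_cases W hl with ⟨_, h⟩ | ⟨τ, σ', rest, _, hreg, _⟩
  · exact hκν h
  · exact critical_not_regular W hc hreg (Or.inl rfl)

lemma gradPaths_upper {ν κ : Finset V} (hu : W.UpperRegular ν) (hκ : W.Critical κ) :
    GradPaths W ν κ = ∅ := by
  obtain ⟨σ, hreg⟩ := hu
  ext l
  simp only [Set.mem_empty_iff_false, iff_false]
  intro hl
  rcases gradPath_cases W hl with ⟨_, h⟩ | ⟨τ, σ', rest, _, hreg', _⟩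
  · subst h
    exact critical_not_regular W hκ hreg (Or.inr rfl)
  · exact not_lower_and_upper W ⟨τ, hreg'⟩ ⟨σ, hreg⟩

lemma cogradPaths_self_critical {κ : Finset V} (hκ : W.Critical κ) :
    CogradPaths W κ κ = {[κ]} := by
  ext l
  constructor
  · intro hl
    obtain ⟨hp, hh, hlast⟩ := hl
    rcases cogradPath_decomp W hp hlast with h | ⟨l', σ, τ', heq, _, _, _, hreg, _, _⟩
    · exact h
    · exact absurd (Or.inr rfl) (fun h => critical_not_regular W hκ hreg h)
  · rintro rfl
    exact ⟨IsCogradPathList.single κ (critical_mem_cplx W hκ), rfl, rfl⟩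

lemma cogradPaths_critical_ne {ν κ : Finset V} (hc : W.Critical ν) (hκν : κ ≠ ν) :
    CogradPaths W κ ν = ∅ := by
  ext l
  simp only [Set.mem_empty_iff_false, iff_false]
  intro hl
  obtain ⟨hp, hh, hlast⟩ := hl
  rcases cogradPath_decomp W hp hlast with h | ⟨l', σ, τ', heq, _, _, _, hreg, _, _⟩
  · subst h
    exact hκν (by simpa using hh.symm)
  · exact critical_not_regular W hc hreg (Or.inr rfl)

lemma cogradPaths_lower {ν κ : Finset V} (hl : W.LowerRegular ν) (hκ : W.Critical κ) :
    CogradPaths W κ ν = ∅ := by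
  obtain ⟨τ, hreg⟩ := hl
  ext l
  simp only [Set.mem_empty_iff_false, iff_false]
  intro hmem
  obtain ⟨hp, hh, hlast⟩ := hmem
  rcases cogradPath_decomp W hp hlast with h | ⟨l', σ, τ', heq, _, _, _, hreg', _, _⟩
  · subst h
    have : κ = ν := by simpa using hh.symm
    exact critical_not_regular W (this ▸ hκ) hreg (Or.inl rfl)
  · exact not_lower_and_upper W ⟨τ, hreg⟩ ⟨σ, hreg'⟩

end Aux4

section MainGrad

variable (W : MorseSeq V)

lemma grad_main {Λ : Finset V → Finset (Finset V)} (hΛ : IsRefMap W Λ)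
    {κ : Finset V} (hκ : W.Critical κ) :
    ∀ i, i ≤ W.k → ∀ ν ∈ W.seq i,
      (GradPaths W ν κ).Finite ∧ (κ ∈ Λ ν ↔ Odd (GradPaths W ν κ).ncard) := by
  intro i
  induction i using Nat.strong_induction_on with
  | _ i ih =>
    intro hik ν hν
    rcases Nat.eq_zero_or_pos i with rfl | hpos
    · rw [W.init] at hν; simp at hν
    by_cases hprev : ν ∈ W.seq (i-1)
    · exact ih (i-1) (by omega) (by omega) ν hprev
    rcases step_cases W hpos hik hν hprev with hc | ⟨τ, hreg, hfp, hEq⟩ | ⟨σ, hreg, hfp, hEq⟩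
    · -- ν is critical
      by_cases hκν : κ = ν
      · subst hκν
        rw [gradPaths_self_critical W hc, hΛ.2.1 κ hc]
        refine ⟨Set.finite_singleton _, ?_⟩
        simp [Set.ncard_singleton]
      · rw [gradPaths_critical_ne W hc hκν, hΛ.2.1 ν hc]
        refine ⟨Set.finite_empty, ?_⟩
        simp [hκν]
    · -- ν is lower regular with partner τ
      classical
      have hκν : κ ≠ ν := fun h => critical_not_regular W (h ▸ hκ) hreg (Or.inl rfl)
      set S : Finset (Finset V) := (bd τ).erase ν with hS
      have hIH : ∀ σ' ∈ S,
          (GradPaths W σ' κ).Finite ∧ (κ ∈ Λ σ' ↔ Odd (GradPaths W σ' κ).ncard) := by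
        intro σ' hσ'
        obtain ⟨hne, hbd⟩ := Finset.mem_erase.mp hσ'
        exact ih (i-1) (by omega) (by omega) σ' (bd_mem_earlier W hpos hik hfp hEq hbd hne)
      set F : Finset V → Finset (List (Finset V)) := fun σ' =>
        if h : (GradPaths W σ' κ).Finite then h.toFinset.image (fun l => ν :: τ :: l)
        else ∅ with hF
      have hFval : ∀ σ' (h : (GradPaths W σ' κ).Finite),
          F σ' = h.toFinset.image (fun l => ν :: τ :: l) := by
        intro σ' h
        rw [hF]
        simp only
        rw [dif_pos h]
      have hset : GradPaths W ν κ = ↑(S.biUnion F) := by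
        ext l
        simp only [Finset.coe_biUnion, Set.mem_iUnion, Finset.mem_coe]
        constructor
        · intro hl
          rcases gradPath_cases W hl with ⟨_, h⟩ | ⟨τ₀, σ', rest, rfl, hreg₀, hbd, hne, htail⟩
          · exact absurd h hκν
          · have hττ : τ₀ = τ := regular_unique_upper W hreg₀ hreg
            subst hττ
            have hσ'S : σ' ∈ S := Finset.mem_erase.mpr ⟨hne, hbd⟩
            refine ⟨σ', hσ'S, ?_⟩
            rw [hFval σ' (hIH σ' hσ'S).1]
            exact Finset.mem_image.mpr ⟨σ' :: rest,
              (Set.Finite.mem_toFinset _).mpr htail, rfl⟩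
        · rintro ⟨σ', hσ'S, hlF⟩
          rw [hFval σ' (hIH σ' hσ'S).1] at hlF
          obtain ⟨l₀, hl₀, rfl⟩ := Finset.mem_image.mp hlF
          rw [Set.Finite.mem_toFinset] at hl₀
          obtain ⟨hne, hbd⟩ := Finset.mem_erase.mp hσ'S
          exact gradPath_build W hreg hbd hne hl₀
      have hdisj : ∀ a ∈ S, ∀ b ∈ S, a ≠ b → Disjoint (F a) (F b) := by
        intro a ha b hb hab
        rw [Finset.disjoint_left]
        intro x hxa hxb
        rw [hFval a (hIH a ha).1] at hxa
        rw [hFval b (hIH b hb).1] at hxb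
        obtain ⟨l₁, hl₁, rfl⟩ := Finset.mem_image.mp hxa
        obtain ⟨l₂, hl₂, heq⟩ := Finset.mem_image.mp hxb
        rw [Set.Finite.mem_toFinset] at hl₁ hl₂
        have hll : l₂ = l₁ := by simpa using heq
        subst hll
        have h1 : l₂.head? = some a := hl₁.2.1
        have h2 : l₂.head? = some b := hl₂.2.1
        rw [h1] at h2
        exact hab (by simpa using h2)
      have hcard : ∀ σ' ∈ S, (F σ').card = (GradPaths W σ' κ).ncard := by
        intro σ' hσ'
        rw [hFval σ' (hIH σ' hσ').1,
          Finset.card_image_of_injective _ (fun a b h => by simpa using h)]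
        exact (Set.ncard_eq_toFinset_card _ (hIH σ' hσ').1).symm
      -- the algebraic side
      have hup : W.UpperRegular τ := ⟨ν, hreg⟩
      have heven := chainSum_empty_even (hΛ.2.2 τ hup).2 κ
      have hνbd : ν ∈ bd τ := regular_mem_bd W hreg
      have hsplit : ((bd τ).filter fun σ0 => κ ∈ Λ σ0).card =
          (S.filter fun σ0 => κ ∈ Λ σ0).card + (if κ ∈ Λ ν then 1 else 0) := by
        rw [← Finset.insert_erase hνbd, Finset.filter_insert]
        by_cases h : κ ∈ Λ ν
        · rw [if_pos h, Finset.card_insert_of_notMem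
            (fun hmem => Finset.notMem_erase ν (bd τ) (Finset.mem_filter.mp hmem).1)]
          simp [h, hS]
        · simp [h, hS]
      have hΛiff : κ ∈ Λ ν ↔ Odd ((S.filter fun σ0 => κ ∈ Λ σ0).card) := by
        rw [Nat.odd_iff]
        constructor
        · intro h
          rw [if_pos h] at hsplit
          omega
        · intro h
          by_contra h'
          rw [if_neg h'] at hsplit
          omega
      refine ⟨by rw [hset]; exact (S.biUnion F).finite_toSet, ?_⟩
      rw [hset, Set.ncard_coe_finset, odd_card_biUnion S F hdisj, hΛiff]
      have hfilter : (S.filter fun σ0 => κ ∈ Λ σ0) = (S.filter fun a => Odd (F a).card) := by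
        apply Finset.filter_congr
        intro σ' hσ'
        rw [(hIH σ' hσ').2, hcard σ' hσ']
      rw [hfilter]
    · -- ν is upper regular with partner σ
      have hup : W.UpperRegular ν := ⟨σ, hreg⟩
      rw [gradPaths_upper W hup hκ, (hΛ.2.2 ν hup).1]
      refine ⟨Set.finite_empty, ?_⟩
      simp

end MainGrad

section MainCograd

variable (W : MorseSeq V)

lemma cograd_main {Vee : Finset V → Finset (Finset V)} (hV : IsCorefMap W Vee)
    {κ : Finset V} (hκ : W.Critical κ) :
    ∀ d i, i ≤ W.k → W.k ≤ i + d → ∀ ν ∈ W.cplx, ν ∉ W.seq i →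
      (CogradPaths W κ ν).Finite ∧ (κ ∈ Vee ν ↔ Odd (CogradPaths W κ ν).ncard) := by
  intro d
  induction d with
  | zero =>
    intro i h1 h2 ν hν hνi
    have : i = W.k := by omega
    subst this
    exact absurd hν hνi
  | succ d ih =>
    intro i h1 h2 ν hν hνi
    have hik : i < W.k := by
      rcases Nat.lt_or_ge i W.k with h | h
      · exact h
      · have : i = W.k := by omega
        subst this
        exact absurd hν hνi
    by_cases hnext : ν ∈ W.seq (i+1)
    swap
    · exact ih (i+1) (by omega) (by omega) ν hν hnext
    have h1' : 1 ≤ i + 1 := by omega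
    have h2' : i + 1 ≤ W.k := by omega
    have hprev : ν ∉ W.seq ((i+1)-1) := by simpa using hνi
    rcases step_cases W h1' h2' hnext hprev with hc | ⟨τ, hreg, hfp, hEq⟩ | ⟨σ, hreg, hfp, hEq⟩
    · -- ν is critical
      by_cases hκν : κ = ν
      · subst hκν
        rw [cogradPaths_self_critical W hκ, hV.2.1 κ hc]
        refine ⟨Set.finite_singleton _, ?_⟩
        simp [Set.ncard_singleton]
      · rw [cogradPaths_critical_ne W hc hκν, hV.2.1 ν hc]
        refine ⟨Set.finite_empty, ?_⟩
        simp [hκν]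
    · -- ν is lower regular with partner τ
      have hlr : W.LowerRegular ν := ⟨τ, hreg⟩
      rw [cogradPaths_lower W hlr hκ, (hV.2.2 ν hlr).1]
      refine ⟨Set.finite_empty, ?_⟩
      simp
    · -- ν is upper regular with lower partner σ
      classical
      have hκν : κ ≠ ν := fun h => critical_not_regular W (h ▸ hκ) hreg (Or.inr rfl)
      set S : Finset (Finset V) := (cobd W.cplx σ).erase ν with hS
      have hIH : ∀ τ' ∈ S,
          (CogradPaths W κ τ').Finite ∧ (κ ∈ Vee τ' ↔ Odd (CogradPaths W κ τ').ncard) := by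
        intro τ' hτ'
        obtain ⟨hne, hcobd⟩ := Finset.mem_erase.mp hτ'
        have hnotin : τ' ∉ W.seq (i+1) := cobd_mem_later W h2' hfp hcobd hne
        exact ih (i+1) (by omega) (by omega) τ' (mem_cobd_iff.mp hcobd).1 hnotin
      set F : Finset V → Finset (List (Finset V)) := fun τ' =>
        if h : (CogradPaths W κ τ').Finite then h.toFinset.image (fun l => l ++ [σ, ν])
        else ∅ with hF
      have hFval : ∀ τ' (h : (CogradPaths W κ τ').Finite),
          F τ' = h.toFinset.image (fun l => l ++ [σ, ν]) := by
        intro τ' h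
        rw [hF]
        simp only
        rw [dif_pos h]
      have hset : CogradPaths W κ ν = ↑(S.biUnion F) := by
        ext l
        simp only [Finset.coe_biUnion, Set.mem_iUnion, Finset.mem_coe]
        constructor
        · intro hl
          obtain ⟨hp, hh, hlast⟩ := hl
          rcases cogradPath_decomp W hp hlast with h |
            ⟨l', σ'', τ', heq, hp', hlast', hhead', hreg', hcobd', hne'⟩
          · subst h
            exact absurd (by simpa using hh.symm) hκν
          · have hσσ : σ'' = σ := regular_unique_lower W hreg' hreg
            subst hσσ
            have hτ'S : τ' ∈ S := Finset.mem_erase.mpr ⟨fun h => hne' h.symm, hcobd'⟩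
            have hl' : l' ∈ CogradPaths W κ τ' := by
              refine ⟨hp', ?_, hlast'⟩
              rw [hhead', hh]
            refine ⟨τ', hτ'S, ?_⟩
            rw [hFval τ' (hIH τ' hτ'S).1]
            exact Finset.mem_image.mpr ⟨l', (Set.Finite.mem_toFinset _).mpr hl', heq.symm⟩
        · rintro ⟨τ', hτ'S, hlF⟩
          rw [hFval τ' (hIH τ' hτ'S).1] at hlF
          obtain ⟨l₀, hl₀, rfl⟩ := Finset.mem_image.mp hlF
          rw [Set.Finite.mem_toFinset] at hl₀
          obtain ⟨hne, hcobd⟩ := Finset.mem_erase.mp hτ'S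
          exact cogradPath_build W hreg hcobd (fun h => hne h.symm) hl₀
      have hdisj : ∀ a ∈ S, ∀ b ∈ S, a ≠ b → Disjoint (F a) (F b) := by
        intro a ha b hb hab
        rw [Finset.disjoint_left]
        intro x hxa hxb
        rw [hFval a (hIH a ha).1] at hxa
        rw [hFval b (hIH b hb).1] at hxb
        obtain ⟨l₁, hl₁, rfl⟩ := Finset.mem_image.mp hxa
        obtain ⟨l₂, hl₂, heq⟩ := Finset.mem_image.mp hxb
        rw [Set.Finite.mem_toFinset] at hl₁ hl₂
        have hll : l₂ = l₁ := List.append_left_injective _ heq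
        subst hll
        have hg1 : l₂.getLast? = some a := hl₁.2.2
        have hg2 : l₂.getLast? = some b := hl₂.2.2
        rw [hg1] at hg2
        exact hab (by simpa using hg2)
      have hcard : ∀ τ' ∈ S, (F τ').card = (CogradPaths W κ τ').ncard := by
        intro τ' hτ'
        rw [hFval τ' (hIH τ' hτ').1,
          Finset.card_image_of_injective _ (List.append_left_injective _)]
        exact (Set.ncard_eq_toFinset_card _ (hIH τ' hτ').1).symm
      have hlrσ : W.LowerRegular σ := ⟨ν, hreg⟩
      have heven := chainSum_empty_even (hV.2.2 σ hlrσ).2 κ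
      have hνcobd : ν ∈ cobd W.cplx σ := regular_mem_cobd W hreg
      have hsplit : ((cobd W.cplx σ).filter fun τ0 => κ ∈ Vee τ0).card =
          (S.filter fun τ0 => κ ∈ Vee τ0).card + (if κ ∈ Vee ν then 1 else 0) := by
        rw [← Finset.insert_erase hνcobd, Finset.filter_insert]
        by_cases h : κ ∈ Vee ν
        · rw [if_pos h, Finset.card_insert_of_notMem
            (fun hmem => Finset.notMem_erase ν (cobd W.cplx σ) (Finset.mem_filter.mp hmem).1)]
          simp [h, hS]
        · simp [h, hS]
      have hViff : κ ∈ Vee ν ↔ Odd ((S.filter fun τ0 => κ ∈ Vee τ0).card) := by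
        rw [Nat.odd_iff]
        constructor
        · intro h
          rw [if_pos h] at hsplit
          omega
        · intro h
          by_contra h'
          rw [if_neg h'] at hsplit
          omega
      refine ⟨by rw [hset]; exact (S.biUnion F).finite_toSet, ?_⟩
      rw [hset, Set.ncard_coe_finset, odd_card_biUnion S F hdisj, hViff]
      have hfilter : (S.filter fun τ0 => κ ∈ Vee τ0) = (S.filter fun a => Odd (F a).card) := by
        apply Finset.filter_congr
        intro τ' hτ'
        rw [(hIH τ' hτ').2, hcard τ' hτ']
      rw [hfilter]

end MainCograd

/-- `κ ∈ ∧(ν)` iff the number of gradient paths from `ν` to `κ` is odd,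
and `κ ∈ ∨(ν)` iff the number of cogradient paths from `κ` to `ν` is odd. -/
theorem reference_iff_odd_gradient_paths (W : MorseSeq V)
    (Λ Vee : Finset V → Finset (Finset V))
    (hΛ : IsRefMap W Λ) (hV : IsCorefMap W Vee)
    (κ ν : Finset V) (hκ : W.Critical κ) (hν : ν ∈ W.cplx) :
    (κ ∈ Λ ν ↔ Odd (GradPaths W ν κ).ncard) ∧
    (κ ∈ Vee ν ↔ Odd (CogradPaths W κ ν).ncard) := by
  constructor
  · exact (grad_main W hΛ hκ W.k le_rfl ν hν).2
  · exact (cograd_main W hV hκ W.k 0 (Nat.zero_le _) (by omega) ν hν (by rw [W.init]; simp)).2
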